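/- arXiv:1209.0102 — 6 statements merged into one kernel-verified Lean document; each statement's English description precedes it below -/
import Mathlib

section
/- Every subdivision has a simplicial specialization: if f : K → K' is a subdivision of finite simplicial complexes with vertex sets V and V', then there exists a vertex map f₀ : V → V' such that f₀(v) ∈ f({v}) for every v ∈ V and the induced simplicial map c(A) = {f₀(v) : v ∈ A} satisfies c(A) ∈ K' and c(A) ⊆ f(A) for every A ∈ K; that is, c is a Sperner coloring of f. -/
open scoped Classical

/-- A finite simplicial complex on the vertex set `V`: a collection of finite subsets of `V`
(faces) closed under taking subsets. -/
def IsComplex {V : Type*} (K : Finset (Finset V)) : Prop :=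
  ∀ A ∈ K, ∀ B, B ⊆ A → B ∈ K

/-- The support of `k : V → ℝ`, i.e. `{v : k v > 0}`. -/
noncomputable def spt {V : Type*} [Fintype V] (k : V → ℝ) : Finset V :=
  Finset.univ.filter (fun v => 0 < k v)

/-- The geometric realization of a complex `K` as a subspace of `ℝ^V`. -/
def realization {V : Type*} [Fintype V] (K : Finset (Finset V)) : Set (V → ℝ) :=
  {k | (∀ v, 0 ≤ k v) ∧ ∑ v, k v = 1 ∧ spt k ∈ K}

/-- `f` is an order preserving map from `K` to `K'`:
`A ⊆ B ∈ K` implies `f A ⊆ f B ∈ K'`. -/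
def IsOrderPreserving {V V' : Type*} (K : Finset (Finset V)) (K' : Finset (Finset V'))
    (f : Finset V → Finset V') : Prop :=
  ∀ A B, B ∈ K → A ⊆ B → f A ⊆ f B ∧ f B ∈ K'

/-- `f` is a subdivision: an order preserving map `K → K'` for which there is a homeomorphism
`h : |K| → |K'|` with `spt (h k) = f (spt k)` for all `k ∈ |K|`. -/
def IsSubdivision {V V' : Type*} [Fintype V] [Fintype V'] (K : Finset (Finset V))
    (K' : Finset (Finset V')) (f : Finset V → Finset V') : Prop :=
  IsOrderPreserving K K' f ∧
  ∃ h : realization K ≃ₜ realization K',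
    ∀ k : realization K, spt ((h k : V' → ℝ)) = f (spt (k : V → ℝ))

/-- A Sperner coloring of a subdivision `f : K → K'`: a simplicial map `c : K → K'`
(induced by a vertex map) with `c A ⊆ f A` for every face `A ∈ K`. -/
def IsSpernerColoring {V V' : Type*} [DecidableEq V'] (K : Finset (Finset V))
    (K' : Finset (Finset V')) (f : Finset V → Finset V')
    (c : Finset V → Finset V') : Prop :=
  (∃ c₀ : V → V', ∀ A : Finset V, c A = A.image c₀) ∧
  (∀ A ∈ K, c A ∈ K') ∧ (∀ A ∈ K, c A ⊆ f A)


/-- Every subdivision has a simplicial specialization: if `f : K → K'` is a subdivision of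
finite simplicial complexes then there is a vertex map `f₀ : V → V'` with `f₀ v ∈ f {v}`
for every vertex `v`, such that the induced simplicial map `A ↦ f₀ '' A` lands in `K'` and
satisfies `f₀ '' A ⊆ f A` for every `A ∈ K`; i.e. it is a Sperner coloring of `f`. -/
theorem subdivision_has_simplicial_specialization {V V' : Type*} [Fintype V] [Fintype V']
    [DecidableEq V'] (K : Finset (Finset V)) (K' : Finset (Finset V'))
    (hK : IsComplex K) (hK' : IsComplex K')
    (hV : ∀ v : V, ({v} : Finset V) ∈ K)
    (f : Finset V → Finset V') (hf : IsSubdivision K K' f) :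
    ∃ f₀ : V → V', (∀ v : V, f₀ v ∈ f {v}) ∧
      (∀ A ∈ K, A.image f₀ ∈ K' ∧ A.image f₀ ⊆ f A) ∧
      IsSpernerColoring K K' f (fun A => A.image f₀) := by

  obtain ⟨hop, h, hh⟩ := hf
  -- f {v} is nonempty for each v
  have hne : ∀ v : V, (f {v}).Nonempty := by
    intro v
    set k : V → ℝ := fun w => if w = v then 1 else 0 with hk
    have hspt : spt k = {v} := by
      ext w
      simp [spt, hk, Finset.mem_filter]
      split <;> simp_all
    have hkmem : k ∈ realization K := by
      refine ⟨fun w => ?_, ?_, ?_⟩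
      · by_cases hw : w = v <;> simp [hk, hw]
      · simp [hk]
      · rw [hspt]; exact hV v
    have := hh ⟨k, hkmem⟩
    rw [hspt] at this
    rw [← this]
    -- spt of a point in realization K' is nonempty since coords sum to 1
    obtain ⟨hpos, hsum, _⟩ := (h ⟨k, hkmem⟩).2
    by_contra hempty
    rw [Finset.not_nonempty_iff_eq_empty] at hempty
    have hzero : ∀ w : V', (h ⟨k, hkmem⟩ : V' → ℝ) w = 0 := by
      intro w
      have : w ∉ spt ((h ⟨k, hkmem⟩ : V' → ℝ)) := by rw [hempty]; exact Finset.notMem_empty w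
      simp [spt, Finset.mem_filter] at this
      exact le_antisymm this (hpos w)
    rw [Finset.sum_congr rfl (fun w _ => hzero w)] at hsum
    simp at hsum
  choose f₀ hf₀ using hne
  have key : ∀ A ∈ K, A.image f₀ ∈ K' ∧ A.image f₀ ⊆ f A := by
    intro A hA
    have hsub : A.image f₀ ⊆ f A := by
      intro w hw
      obtain ⟨v, hv, rfl⟩ := Finset.mem_image.mp hw
      exact (hop {v} A hA (Finset.singleton_subset_iff.mpr hv)).1 (hf₀ v)
    exact ⟨hK' (f A) (hop A A hA (le_refl A)).2 _ hsub, hsub⟩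
  exact ⟨f₀, hf₀, key, ⟨f₀, fun A => rfl⟩, fun A hA => (key A hA).1,
    fun A hA => (key A hA).2⟩
end

section
/- For every y ∈ Y the maximum row sum M_y = max_{j∈I} S_j y is positive, J(y)(n,i) ≥ 0 for all (n,i), S_i(J(y)) = 1 for every i ∈ I, and there exists i ∈ I with |{n ∈ N : J(y)(n,i) > 0}| ≤ m i; consequently J maps Y into X. Moreover, for any i ∈ I attaining the maximum M_y one has {n : J(y)(n,i) > 0} = {n : y(n,i) > 0}. -/
/-- The row sum `S_i x = ∑_{n ∈ N} x (n, i)`. -/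
def Srow {N I : Type*} [Fintype N] (x : N × I → ℝ) (i : I) : ℝ := ∑ n, x (n, i)

/-- `X = {x : N × I → ℝ≥0 | S_i x = 1 for all i, and |supp(x(·,i))| ≤ m i for some i}`. -/
def Xset {N I : Type*} [Fintype N] (m : I → ℕ) : Set (N × I → ℝ) :=
  {x | (∀ p, 0 ≤ x p) ∧ (∀ i, Srow x i = 1) ∧
    ∃ i, ({n : N | 0 < x (n, i)}).ncard ≤ m i}

/-- `Y = {y : N × I → ℝ≥0 | ∑ y = 1 and |supp(y(·,i))| ≤ m i for every i}`. -/
def Yset {N I : Type*} [Fintype N] [Fintype I] (m : I → ℕ) : Set (N × I → ℝ) :=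
  {y | (∀ p, 0 ≤ y p) ∧ (∑ p, y p = 1) ∧
    ∀ i, ({n : N | 0 < y (n, i)}).ncard ≤ m i}

/-- `M_y = max_{j ∈ I} S_j y`. -/
noncomputable def Mmax {N I : Type*} [Fintype N] [Fintype I] [Nonempty I]
    (y : N × I → ℝ) : ℝ :=
  Finset.univ.sup' Finset.univ_nonempty (fun j => Srow y j)

/-- `s_y(i) = (M_y - S_i y) / |N|`. -/
noncomputable def sdef {N I : Type*} [Fintype N] [Fintype I] [Nonempty I]
    (y : N × I → ℝ) (i : I) : ℝ :=
  (Mmax y - Srow y i) / (Fintype.card N)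

/-- `J(y)(n,i) = (y(n,i) + s_y(i)) / M_y`. -/
noncomputable def Jmap {N I : Type*} [Fintype N] [Fintype I] [Nonempty I]
    (y : N × I → ℝ) : N × I → ℝ :=
  fun p => (y p + sdef y p.2) / Mmax y

/-- `r_x(i) = min {r ≥ 0 | |{n : x(n,i) > r}| ≤ m i}`. -/
noncomputable def rmin {N I : Type*} [Fintype N] (m : I → ℕ) (x : N × I → ℝ) (i : I) : ℝ :=
  sInf {r : ℝ | 0 ≤ r ∧ ({n : N | r < x (n, i)}).ncard ≤ m i}

/-- `H(x)(n,i) = β_x * max (x(n,i) - r_x(i)) 0`, where `β_x` normalizes the total sum to 1. -/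
noncomputable def Hmap {N I : Type*} [Fintype N] [Fintype I] (m : I → ℕ)
    (x : N × I → ℝ) : N × I → ℝ :=
  fun p => (∑ q : N × I, max (x q - rmin m x q.2) 0)⁻¹ * max (x p - rmin m x p.2) 0

/-- For `y ∈ Y`: the maximum row sum `M_y` is positive, `J y` is nonnegative with all row
sums equal to `1`, some `i` has `|supp (J y)(·,i)| ≤ m i`, hence `J y ∈ X`; moreover for
any `i` attaining the maximum `M_y` the supports of `(J y)(·,i)` and `y(·,i)` agree. -/
theorem Jmap_mem_Xset {N I : Type*} [Fintype N] [Fintype I] [Nonempty N] [Nonempty I]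
    (m : I → ℕ) (hm : ∀ i, 1 ≤ m i) (y : N × I → ℝ) (hy : y ∈ Yset m) :
    0 < Mmax y ∧
    (∀ p, 0 ≤ Jmap y p) ∧
    (∀ i, Srow (Jmap y) i = 1) ∧
    (∃ i, ({n : N | 0 < Jmap y (n, i)}).ncard ≤ m i) ∧
    Jmap y ∈ Xset m ∧
    (∀ i, Srow y i = Mmax y →
      {n : N | 0 < Jmap y (n, i)} = {n : N | 0 < y (n, i)}) := by
  obtain ⟨hpos, hsum, hcard⟩ := hy
  have hle : ∀ j, Srow y j ≤ Mmax y := fun j =>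
    Finset.le_sup' (fun j => Srow y j) (Finset.mem_univ j)
  have hsumrows : ∑ j, Srow y j = 1 := by
    rw [← hsum, Fintype.sum_prod_type_right]
    rfl
  have hM : 0 < Mmax y := by
    by_contra h
    push_neg at h
    have : ∑ j, Srow y j ≤ 0 := Finset.sum_nonpos fun j _ => (hle j).trans h
    linarith [hsumrows]
  have hs : ∀ i, 0 ≤ sdef y i := fun i =>
    div_nonneg (by linarith [hle i]) (Nat.cast_nonneg _)
  have hJ0 : ∀ p, 0 ≤ Jmap y p := fun p =>
    div_nonneg (add_nonneg (hpos p) (hs p.2)) hM.le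
  have hcardN : (0:ℝ) < Fintype.card N := by
    exact_mod_cast Fintype.card_pos
  have hrow : ∀ i, Srow (Jmap y) i = 1 := by
    intro i
    have : Srow (Jmap y) i = (Srow y i + (Fintype.card N) * sdef y i) / Mmax y := by
      simp only [Srow, Jmap, ← Finset.sum_div, Finset.sum_add_distrib,
        Finset.sum_const, nsmul_eq_mul, Finset.card_univ]
    rw [this, sdef, mul_div_cancel₀ _ hcardN.ne']
    field_simp
    ring
  have hsupp : ∀ i, Srow y i = Mmax y →
      {n : N | 0 < Jmap y (n, i)} = {n : N | 0 < y (n, i)} := by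
    intro i hi
    have hsi : sdef y i = 0 := by simp [sdef, hi]
    ext n
    simp only [Set.mem_setOf_eq, Jmap, hsi, add_zero]
    exact div_pos_iff_of_pos_right hM
  obtain ⟨i0, _, hi0⟩ := Finset.exists_mem_eq_sup' (Finset.univ_nonempty (α := I))
    (fun j => Srow y j)
  have hex : ∃ i, ({n : N | 0 < Jmap y (n, i)}).ncard ≤ m i :=
    ⟨i0, by rw [hsupp i0 hi0.symm]; exact hcard i0⟩
  exact ⟨hM, hJ0, hrow, hex, ⟨hJ0, hrow, hex⟩, hsupp⟩
end

section
/- H maps X into Y: for every x ∈ X one has H(x)(n,i) ≥ 0 for all (n,i), ∑_{(n,i)} H(x)(n,i) = 1, and |{n ∈ N : H(x)(n,i) > 0}| ≤ m i for every i ∈ I. -/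
/-- `H` maps `X` into `Y`: for `x ∈ X`, `H x` is nonnegative, its total sum is `1`, and
`|{n : (H x)(n,i) > 0}| ≤ m i` for every `i`. -/
theorem Hmap_mem_Yset {N I : Type*} [Fintype N] [Fintype I] [Nonempty N] [Nonempty I]
    (m : I → ℕ) (hm : ∀ i, 1 ≤ m i) (x : N × I → ℝ) (hx : x ∈ Xset m) :
    (∀ p, 0 ≤ Hmap m x p) ∧
    (∑ p, Hmap m x p = 1) ∧
    (∀ i, ({n : N | 0 < Hmap m x (n, i)}).ncard ≤ m i) ∧
    Hmap m x ∈ Yset m := by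
  obtain ⟨hx0, hS, i₀, hi₀⟩ := hx
  -- basic facts about rmin
  have key : ∀ i : I, 0 ≤ rmin m x i ∧ ({n : N | rmin m x i < x (n, i)}).ncard ≤ m i := by
    intro i
    set S : Set ℝ := {r : ℝ | 0 ≤ r ∧ ({n : N | r < x (n, i)}).ncard ≤ m i} with hSdef
    have hone : (1:ℝ) ∈ S := by
      refine ⟨by norm_num, ?_⟩
      have hempty : {n : N | (1:ℝ) < x (n, i)} = ∅ := by
        ext n
        simp only [Set.mem_setOf_eq, Set.mem_empty_iff_false, iff_false, not_lt]
        calc x (n, i) ≤ ∑ n', x (n', i) :=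
              Finset.single_le_sum (fun n' _ => hx0 (n', i)) (Finset.mem_univ n)
          _ = 1 := hS i
      simp [hempty]
    have hne : S.Nonempty := ⟨1, hone⟩
    have hbdd : BddBelow S := ⟨0, fun r hr => hr.1⟩
    have h0 : 0 ≤ rmin m x i := le_csInf hne (fun r hr => hr.1)
    refine ⟨h0, ?_⟩
    by_cases hA : {n : N | rmin m x i < x (n, i)} = ∅
    · simp [hA]
    · obtain ⟨n₀, hn₀⟩ := Set.nonempty_iff_ne_empty.mpr hA
      set A : Finset N := Finset.univ.filter (fun n => rmin m x i < x (n, i)) with hAdef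
      have hAne : A.Nonempty := ⟨n₀, by simp [hAdef]; exact hn₀⟩
      set μ := A.inf' hAne (fun n => x (n, i)) with hμdef
      have hμ : rmin m x i < μ := by
        rw [Finset.lt_inf'_iff]
        intro n hn
        simpa [hAdef] using (Finset.mem_filter.mp hn).2
      have hlt : sInf S < μ := hμ
      obtain ⟨s, hsS, hs⟩ := exists_lt_of_csInf_lt hne hlt
      have hsub : {n : N | rmin m x i < x (n, i)} ⊆ {n : N | s < x (n, i)} := by
        intro n hn
        have hμle : μ ≤ x (n, i) := Finset.inf'_le _ (by simp [hAdef]; exact hn)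
        exact lt_of_lt_of_le hs hμle
      calc ({n : N | rmin m x i < x (n, i)}).ncard
          ≤ ({n : N | s < x (n, i)}).ncard := Set.ncard_le_ncard hsub (Set.toFinite _)
        _ ≤ m i := hsS.2
  -- rmin at i₀ is 0
  have hzero : rmin m x i₀ = 0 := by
    have hle : rmin m x i₀ ≤ 0 :=
      csInf_le ⟨0, fun r hr => hr.1⟩ ⟨le_refl 0, hi₀⟩
    exact le_antisymm hle (key i₀).1
  -- total sum T is at least 1
  set T : ℝ := ∑ q : N × I, max (x q - rmin m x q.2) 0 with hTdef
  have hcol : ∑ n : N, max (x (n, i₀) - rmin m x i₀) 0 = 1 := by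
    rw [hzero]
    simp only [sub_zero]
    rw [show (∑ n : N, max (x (n, i₀)) 0) = ∑ n : N, x (n, i₀) from
      Finset.sum_congr rfl (fun n _ => max_eq_left (hx0 (n, i₀)))]
    exact hS i₀
  have hT1 : (1:ℝ) ≤ T := by
    rw [hTdef, Fintype.sum_prod_type_right]
    calc (1:ℝ) = ∑ n : N, max (x (n, i₀) - rmin m x i₀) 0 := hcol.symm
      _ ≤ ∑ j : I, ∑ n : N, max (x (n, j) - rmin m x j) 0 :=
          Finset.single_le_sum (f := fun j => ∑ n : N, max (x (n, j) - rmin m x j) 0)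
            (fun j _ => Finset.sum_nonneg fun n _ => le_max_right _ _)
            (Finset.mem_univ i₀)
  have hTpos : (0:ℝ) < T := lt_of_lt_of_le one_pos hT1
  have hTinv : (0:ℝ) < T⁻¹ := inv_pos.mpr hTpos
  have h1 : ∀ p, 0 ≤ Hmap m x p := fun p =>
    mul_nonneg hTinv.le (le_max_right _ _)
  have h2 : ∑ p, Hmap m x p = 1 := by
    unfold Hmap
    rw [← Finset.mul_sum, ← hTdef, inv_mul_cancel₀ (ne_of_gt hTpos)]
  have h3 : ∀ i, ({n : N | 0 < Hmap m x (n, i)}).ncard ≤ m i := by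
    intro i
    have hset : {n : N | 0 < Hmap m x (n, i)} = {n : N | rmin m x i < x (n, i)} := by
      ext n
      simp only [Set.mem_setOf_eq, Hmap, ← hTdef]
      constructor
      · intro h
        have hmax : 0 < max (x (n, i) - rmin m x i) 0 := by
          by_contra hc
          push_neg at hc
          have : T⁻¹ * max (x (n, i) - rmin m x i) 0 ≤ 0 :=
            mul_nonpos_of_nonneg_of_nonpos hTinv.le hc
          linarith
        have : 0 < x (n, i) - rmin m x i := by
          by_contra hc
          push_neg at hc
          rw [max_eq_right hc] at hmax
          exact lt_irrefl 0 hmax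
        linarith
      · intro h
        have : 0 < x (n, i) - rmin m x i := by linarith
        have hmax : 0 < max (x (n, i) - rmin m x i) 0 := lt_of_lt_of_le this (le_max_left _ _)
        exact mul_pos hTinv hmax
    rw [hset]
    exact (key i).2
  exact ⟨h1, h2, h3, h1, h2, h3⟩
end

section
/- The linear homotopy from J ∘ H to the identity stays inside X: for every x ∈ X and every t ∈ [0,1], the point t·x + (1−t)·J(H(x)) of ℝ^{N×I} lies in X. -/
/-- The linear homotopy from `J ∘ H` to the identity stays inside `X`: for every `x ∈ X`
and `t ∈ [0,1]`, the point `t • x + (1 - t) • J (H x)` lies in `X`. -/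
theorem linear_homotopy_mem_Xset {N I : Type*} [Fintype N] [Fintype I] [Nonempty N]
    [Nonempty I] (m : I → ℕ) (hm : ∀ i, 1 ≤ m i) (x : N × I → ℝ) (hx : x ∈ Xset m)
    (t : ℝ) (ht : t ∈ Set.Icc (0 : ℝ) 1) :
    t • x + (1 - t) • Jmap (Hmap m x) ∈ Xset m := by
  obtain ⟨h0, h1, i₀, hi₀⟩ := hx
  obtain ⟨ht0, ht1⟩ := ht
  set T : ℝ := ∑ q : N × I, max (x q - rmin m x q.2) 0 with hTdef
  have cN : (0 : ℝ) < Fintype.card N := by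
    exact_mod_cast Fintype.card_pos
  -- rmin is nonnegative
  have hrnn : ∀ j, 0 ≤ rmin m x j := by
    intro j
    apply Real.sInf_nonneg
    intro r hr
    exact hr.1
  -- rmin at i₀ is 0
  have hr0 : rmin m x i₀ = 0 := by
    refine le_antisymm ?_ (hrnn i₀)
    apply csInf_le
    · exact ⟨0, fun r hr => hr.1⟩
    · exact ⟨le_refl 0, hi₀⟩
  -- column sums of max terms
  have hcol : ∀ j, ∑ n, max (x (n, j) - rmin m x j) 0 ≤ 1 := by
    intro j
    calc ∑ n, max (x (n, j) - rmin m x j) 0 ≤ ∑ n, x (n, j) := by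
          apply Finset.sum_le_sum
          intro n _
          exact max_le (by linarith [hrnn j, h0 (n, j)]) (h0 (n, j))
      _ = 1 := h1 j
  have hcol0 : ∑ n, max (x (n, i₀) - rmin m x i₀) 0 = 1 := by
    rw [hr0]
    calc ∑ n, max (x (n, i₀) - 0) 0 = ∑ n, x (n, i₀) := by
          apply Finset.sum_congr rfl
          intro n _
          rw [sub_zero, max_eq_left (h0 (n, i₀))]
      _ = 1 := h1 i₀
  have hT1 : (1 : ℝ) ≤ T := by
    rw [hTdef, Fintype.sum_prod_type_right]
    calc (1 : ℝ) = ∑ n, max (x (n, i₀) - rmin m x i₀) 0 := hcol0.symm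
      _ ≤ ∑ j, ∑ n, max (x (n, j) - rmin m x j) 0 := by
          apply Finset.single_le_sum (f := fun j => ∑ n, max (x (n, j) - rmin m x j) 0)
          · intro j _
            exact Finset.sum_nonneg fun n _ => le_max_right _ _
          · exact Finset.mem_univ i₀
  have hTpos : (0 : ℝ) < T := lt_of_lt_of_le one_pos hT1
  have hTinv : (0 : ℝ) < T⁻¹ := inv_pos.mpr hTpos
  -- row sums of Hmap
  have hSH : ∀ j, Srow (Hmap m x) j = T⁻¹ * ∑ n, max (x (n, j) - rmin m x j) 0 := by
    intro j
    simp only [Srow, Hmap, ← hTdef]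
    rw [Finset.mul_sum]
  have hSHle : ∀ j, Srow (Hmap m x) j ≤ T⁻¹ := by
    intro j
    rw [hSH j]
    calc T⁻¹ * ∑ n, max (x (n, j) - rmin m x j) 0 ≤ T⁻¹ * 1 :=
          mul_le_mul_of_nonneg_left (hcol j) (le_of_lt hTinv)
      _ = T⁻¹ := mul_one _
  have hSHi₀ : Srow (Hmap m x) i₀ = T⁻¹ := by
    rw [hSH i₀, hcol0, mul_one]
  have hM : Mmax (Hmap m x) = T⁻¹ := by
    apply le_antisymm
    · exact Finset.sup'_le _ _ fun j _ => hSHle j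
    · rw [← hSHi₀]
      exact Finset.le_sup' _ (Finset.mem_univ i₀)
  have hMne : Mmax (Hmap m x) ≠ 0 := by rw [hM]; exact ne_of_gt hTinv
  have hsnn : ∀ i, 0 ≤ sdef (Hmap m x) i := by
    intro i
    apply div_nonneg _ (le_of_lt cN)
    have := Finset.le_sup' (fun j => Srow (Hmap m x) j) (Finset.mem_univ i)
    simp only [Mmax]
    linarith [this]
  have hHnn : ∀ p, 0 ≤ Hmap m x p := by
    intro p
    exact mul_nonneg (le_of_lt hTinv) (le_max_right _ _)
  have hJnn : ∀ p, 0 ≤ Jmap (Hmap m x) p := by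
    intro p
    apply div_nonneg (add_nonneg (hHnn p) (hsnn p.2))
    rw [hM]; exact le_of_lt hTinv
  -- J row sums are 1
  have hJrow : ∀ i, Srow (Jmap (Hmap m x)) i = 1 := by
    intro i
    have : Srow (Jmap (Hmap m x)) i
        = (Srow (Hmap m x) i + (Fintype.card N : ℝ) * sdef (Hmap m x) i) / Mmax (Hmap m x) := by
      simp only [Srow, Jmap]
      rw [← Finset.sum_div, Finset.sum_add_distrib, Finset.sum_const, Finset.card_univ,
        nsmul_eq_mul]
    rw [this, sdef]
    field_simp
    ring
  -- J at column i₀ equals x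
  have hsi₀ : sdef (Hmap m x) i₀ = 0 := by
    rw [sdef, hSHi₀, hM, sub_self, zero_div]
  have hJi₀ : ∀ n, Jmap (Hmap m x) (n, i₀) = x (n, i₀) := by
    intro n
    have hH : Hmap m x (n, i₀) = T⁻¹ * x (n, i₀) := by
      simp only [Hmap, ← hTdef]
      rw [hr0, sub_zero, max_eq_left (h0 (n, i₀))]
    simp only [Jmap, hsi₀, add_zero, hH, hM]
    field_simp
  refine ⟨?_, ?_, i₀, ?_⟩
  · intro p
    simp only [Pi.add_apply, Pi.smul_apply, smul_eq_mul]
    have := hJnn p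
    have := h0 p
    nlinarith
  · intro i
    simp only [Srow, Pi.add_apply, Pi.smul_apply, smul_eq_mul]
    rw [Finset.sum_add_distrib, ← Finset.mul_sum, ← Finset.mul_sum]
    have hx1 : ∑ n, x (n, i) = 1 := h1 i
    have hJ1 : ∑ n, Jmap (Hmap m x) (n, i) = 1 := hJrow i
    rw [hx1, hJ1]
    ring
  · have hset : {n : N | 0 < (t • x + (1 - t) • Jmap (Hmap m x)) (n, i₀)}
        = {n : N | 0 < x (n, i₀)} := by
      ext n
      simp only [Set.mem_setOf_eq, Pi.add_apply, Pi.smul_apply, smul_eq_mul, hJi₀ n]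
      constructor <;> intro h <;> nlinarith
    rw [hset]
    exact hi₀
end

section
/- H : X → Y is continuous (where X and Y carry the subspace topology from ℝ^{N×I}); in particular x ↦ r_x(i) is continuous on X for each i ∈ I. -/
section Aux

variable {N I : Type*} [Fintype N] [Fintype I] [Nonempty N]

lemma rmin_set_nonempty (m : I → ℕ) (x : N × I → ℝ) (i : I) :
    {r : ℝ | 0 ≤ r ∧ ({n : N | r < x (n, i)}).ncard ≤ m i}.Nonempty := by
  refine ⟨max 0 (Finset.univ.sup' Finset.univ_nonempty fun n => x (n, i)),
    le_max_left _ _, ?_⟩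
  have h : {n : N | max 0 (Finset.univ.sup' Finset.univ_nonempty fun n => x (n, i))
      < x (n, i)} = ∅ := by
    ext n
    simp only [Set.mem_setOf_eq, Set.mem_empty_iff_false, iff_false, not_lt]
    exact (Finset.le_sup' (fun n => x (n, i)) (Finset.mem_univ n)).trans (le_max_right _ _)
  rw [h]
  simp

lemma rmin_set_bddBelow (m : I → ℕ) (x : N × I → ℝ) (i : I) :
    BddBelow {r : ℝ | 0 ≤ r ∧ ({n : N | r < x (n, i)}).ncard ≤ m i} :=
  ⟨0, fun _ hr => hr.1⟩

lemma rmin_nonneg (m : I → ℕ) (x : N × I → ℝ) (i : I) : 0 ≤ rmin m x i :=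
  le_csInf (rmin_set_nonempty m x i) fun _ hr => hr.1

lemma rmin_le_add (m : I → ℕ) (x y : N × I → ℝ) (i : I) (c : ℝ) (hc : 0 ≤ c)
    (h : ∀ n, x (n, i) ≤ y (n, i) + c) : rmin m x i ≤ rmin m y i + c := by
  rw [← sub_le_iff_le_add]
  refine le_csInf (rmin_set_nonempty m y i) fun r hr => ?_
  rw [sub_le_iff_le_add]
  refine csInf_le (rmin_set_bddBelow m x i) ⟨by linarith [hr.1], ?_⟩
  refine le_trans (Set.ncard_le_ncard ?_ (Set.toFinite _)) hr.2
  intro n hn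
  simp only [Set.mem_setOf_eq] at hn ⊢
  have := h n
  linarith

lemma rmin_lipschitz (m : I → ℕ) (i : I) :
    LipschitzWith 1 (fun x : N × I → ℝ => rmin m x i) := by
  refine LipschitzWith.of_dist_le_mul fun x y => ?_
  rw [NNReal.coe_one, one_mul, Real.dist_eq, abs_sub_le_iff]
  have key : ∀ u v : N × I → ℝ, rmin m u i - rmin m v i ≤ dist u v := by
    intro u v
    rw [sub_le_iff_le_add, add_comm]
    refine rmin_le_add m u v i (dist u v) dist_nonneg fun n => ?_
    have h1 : dist (u (n, i)) (v (n, i)) ≤ dist u v := dist_le_pi_dist u v (n, i)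
    rw [Real.dist_eq] at h1
    have := abs_le.1 h1
    linarith [this.2]
  exact ⟨key x y, by rw [dist_comm]; exact key y x⟩

lemma rmin_continuous (m : I → ℕ) (i : I) :
    Continuous (fun x : N × I → ℝ => rmin m x i) :=
  (rmin_lipschitz m i).continuous

lemma rmin_eq_zero (m : I → ℕ) (x : N × I → ℝ) (i : I)
    (hi : ({n : N | 0 < x (n, i)}).ncard ≤ m i) : rmin m x i = 0 :=
  le_antisymm (csInf_le (rmin_set_bddBelow m x i) ⟨le_refl 0, hi⟩) (rmin_nonneg m x i)

lemma sum_pos_on_Xset (m : I → ℕ) (x : N × I → ℝ) (hx : x ∈ Xset m) :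
    0 < ∑ q : N × I, max (x q - rmin m x q.2) 0 := by
  obtain ⟨hpos, hsum, i, hi⟩ := hx
  have hr0 : rmin m x i = 0 := rmin_eq_zero m x i hi
  have hfiber : ∑ n : N, max (x (n, i) - rmin m x (n, i).2) 0 = 1 := by
    have : ∀ n : N, max (x (n, i) - rmin m x (n, i).2) 0 = x (n, i) := by
      intro n
      simp only [hr0, sub_zero]
      exact max_eq_left (hpos (n, i))
    rw [Finset.sum_congr rfl fun n _ => this n]
    exact hsum i
  have hrw : ∑ q : N × I, max (x q - rmin m x q.2) 0
      = ∑ j : I, ∑ n : N, max (x (n, j) - rmin m x (n, j).2) 0 :=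
    Fintype.sum_prod_type_right (f := fun q : N × I => max (x q - rmin m x q.2) 0)
  rw [hrw]
  have hle : (1 : ℝ) ≤ ∑ j : I, ∑ n : N, max (x (n, j) - rmin m x (n, j).2) 0 := by
    rw [← hfiber]
    exact Finset.single_le_sum
      (fun j _ => Finset.sum_nonneg fun n _ => le_max_right (x (n, j) - rmin m x (n, j).2) 0) (Finset.mem_univ i)
  linarith

end Aux

/-- `H : X → Y` is continuous (with respect to the subspace topology from `ℝ^{N×I}`);
in particular `x ↦ r_x(i)` is continuous on `X` for each `i`. -/
theorem Hmap_continuousOn {N I : Type*} [Fintype N] [Fintype I] [Nonempty N] [Nonempty I]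
    (m : I → ℕ) (hm : ∀ i, 1 ≤ m i) :
    ContinuousOn (Hmap (N := N) (I := I) m) (Xset m) ∧
    ∀ i : I, ContinuousOn (fun x : N × I → ℝ => rmin m x i) (Xset m) := by
  constructor
  · rw [continuousOn_pi]
    intro p
    have hc : ∀ q : N × I,
        Continuous (fun x : N × I → ℝ => max (x q - rmin m x q.2) 0) :=
      fun q => ((continuous_apply q).sub (rmin_continuous m q.2)).max continuous_const
    have hsum : Continuous
        (fun x : N × I → ℝ => ∑ q : N × I, max (x q - rmin m x q.2) 0) :=
      continuous_finset_sum _ fun q _ => hc q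
    exact (hsum.continuousOn.inv₀ fun x hx => (sum_pos_on_Xset m x hx).ne').mul
      (hc p).continuousOn
  · intro i
    exact (rmin_continuous m i).continuousOn
end

section
/- For all integers n ≥ 1 and r ≥ 1, the collection K_{n,r} is a finite simplicial complex on the vertex set Π_{n,r} (closed under taking subsets), the map f_{n,r} is order preserving into P[1,n], and f_{n,r} : K_{n,r} → P[1,n] is a subdivision: there is a homeomorphism h : |K_{n,r}| → |P[1,n]| with {i : h(k)(i) > 0} = f_{n,r}({a : k(a) > 0}) for every k ∈ |K_{n,r}|. -/
open scoped Classical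
set_option linter.unusedSectionVars false
set_option linter.unusedTactic false
set_option maxHeartbeats 1000000

/-- `Π_{n,r}`: partitions of a sequence of `r` objects into `n` (possibly empty) intervals,
encoded as nondecreasing maps `π : [0,n] → [0,r]` with `π 0 = 0` and `π n = r`. -/
def PartitionNR (n r : ℕ) : Type :=
  {π : Fin (n + 1) → Fin (r + 1) // Monotone π ∧ π 0 = 0 ∧ π (Fin.last n) = Fin.last r}

noncomputable instance (n r : ℕ) : Fintype (PartitionNR n r) := by
  unfold PartitionNR; infer_instance

/-- The subdivision `K_{n,r}` of the `(n-1)`-simplex: faces are sets `A` of partitions such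
that for all `a, b ∈ A` there is `e ∈ {-1, 1}` with `a i ∈ {b i, b i + e}` for every `i`. -/
noncomputable def Knr (n r : ℕ) : Finset (Finset (PartitionNR n r)) :=
  Finset.univ.filter (fun A : Finset (PartitionNR n r) =>
    ∀ a ∈ A, ∀ b ∈ A, ∃ e : ℤ, (e = -1 ∨ e = 1) ∧
      ∀ i : Fin (n + 1), (a.1 i : ℤ) = (b.1 i : ℤ) ∨ (a.1 i : ℤ) = (b.1 i : ℤ) + e)

/-- The subdivision map `f_{n,r}`: a set `A` of partitions is sent to the set of interval
labels `i ∈ [1,n]` (here `i : Fin n` labels interval `i + 1`) which label a nonempty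
interval in at least one partition of `A`. -/
noncomputable def fnr (n r : ℕ) (A : Finset (PartitionNR n r)) : Finset (Fin n) :=
  Finset.univ.filter (fun i : Fin n => ∃ a ∈ A, a.1 i.castSucc ≠ a.1 i.succ)

namespace KnrSub
variable {n r : ℕ}

def ip (a : PartitionNR n r) (i : Fin (n + 1)) : ℤ := (a.1 i : ℤ)

lemma ip0 (a : PartitionNR n r) : ip a 0 = 0 := by
  simp [ip, a.2.2.1]

lemma ipn (a : PartitionNR n r) : ip a (Fin.last n) = r := by
  show ((a.1 (Fin.last n) : Fin (r+1)) : ℤ) = r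
  rw [a.2.2.2]; simp [Fin.last]

lemma ip_mono (a : PartitionNR n r) : Monotone (ip a) := by
  intro i j hij
  have h := a.2.1 hij
  simp only [ip]
  exact_mod_cast h

lemma ip_nonneg (a : PartitionNR n r) (i : Fin (n+1)) : 0 ≤ ip a i := by simp only [ip]; positivity

lemma ip_le (a : PartitionNR n r) (i : Fin (n+1)) : ip a i ≤ r := by
  have := ip_mono a (Fin.le_last i)
  rw [ipn] at this; exact this

lemma part_ext {a b : PartitionNR n r} (h : ∀ i, ip a i = ip b i) : a = b := by
  apply Subtype.ext; funext i
  have := h i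
  simp only [ip, Int.natCast_inj] at this
  exact Fin.ext (by exact_mod_cast this)

noncomputable def dL (z : Fin (n+1) → ℝ) (a : PartitionNR n r) : ℝ :=
  Finset.univ.sup' Finset.univ_nonempty (fun i => z i - (ip a i : ℝ))

noncomputable def dU (z : Fin (n+1) → ℝ) (a : PartitionNR n r) : ℝ :=
  Finset.univ.inf' Finset.univ_nonempty (fun i => z i - (ip a i : ℝ)) + 1

noncomputable def wt (z : Fin (n+1) → ℝ) (a : PartitionNR n r) : ℝ := max (dU z a - dL z a) 0

lemma le_dL (z : Fin (n+1) → ℝ) (a : PartitionNR n r) (i : Fin (n+1)) :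
    z i - (ip a i : ℝ) ≤ dL z a := by
  unfold dL; exact Finset.le_sup' (fun j => z j - (ip a j : ℝ)) (Finset.mem_univ i)

lemma dU_le (z : Fin (n+1) → ℝ) (a : PartitionNR n r) (i : Fin (n+1)) :
    dU z a ≤ z i - (ip a i : ℝ) + 1 :=
  add_le_add_left (Finset.inf'_le _ (Finset.mem_univ i)) 1

lemma dL_le_iff {z : Fin (n+1) → ℝ} {a : PartitionNR n r} {θ : ℝ} :
    dL z a ≤ θ ↔ ∀ i, z i - (ip a i : ℝ) ≤ θ := by
  simp [dL, Finset.sup'_le_iff]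

lemma lt_dU_iff {z : Fin (n+1) → ℝ} {a : PartitionNR n r} {θ : ℝ} :
    θ < dU z a ↔ ∀ i, θ < z i - (ip a i : ℝ) + 1 := by
  constructor
  · intro h i; exact lt_of_lt_of_le h (dU_le z a i)
  · intro h
    have : θ - 1 < Finset.univ.inf' Finset.univ_nonempty (fun i => z i - (ip a i : ℝ)) := by
      rw [Finset.lt_inf'_iff]
      intro i _; have := h i; linarith
    simp only [dU]; linarith

lemma dL_nonneg {z : Fin (n+1) → ℝ} (hz0 : z 0 = 0) (a : PartitionNR n r) : 0 ≤ dL z a := by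
  have := le_dL z a 0
  rw [hz0, ip0] at this; simpa using this

lemma dU_le_one {z : Fin (n+1) → ℝ} (hzn : z (Fin.last n) = (r : ℝ)) (a : PartitionNR n r) :
    dU z a ≤ 1 := by
  have := dU_le z a (Fin.last n)
  rw [hzn, ipn] at this; simpa using this

section mkT
variable {z : Fin (n+1) → ℝ} (hmono : Monotone z) (hz0 : z 0 = 0)
  (hzn : z (Fin.last n) = (r : ℝ)) {θ : ℝ} (h0 : 0 ≤ θ) (h1 : θ < 1)

include hmono hz0 hzn h0 h1

lemma z_nonneg (i : Fin (n+1)) : 0 ≤ z i := by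
  have := hmono (Fin.zero_le i); rw [hz0] at this; exact this

lemma z_le_r (i : Fin (n+1)) : z i ≤ (r : ℝ) := by
  have := hmono (Fin.le_last i); rw [hzn] at this; exact this

lemma ceil_nonneg' (i : Fin (n+1)) : 0 ≤ ⌈z i - θ⌉ := by
  have h2 : (-1 : ℝ) < z i - θ := by
    have := z_nonneg hmono hz0 hzn h0 h1 i; linarith
  have := Int.lt_ceil.mpr (by exact_mod_cast h2 : ((-1 : ℤ) : ℝ) < z i - θ)
  omega

lemma ceil_le_r' (i : Fin (n+1)) : ⌈z i - θ⌉ ≤ (r : ℤ) := by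
  apply Int.ceil_le.mpr
  have := z_le_r hmono hz0 hzn h0 h1 i
  push_cast; linarith

noncomputable def mkT : PartitionNR n r := by
  refine ⟨fun i => ⟨(⌈z i - θ⌉).toNat, ?_⟩, ?_, ?_, ?_⟩
  · have := ceil_le_r' hmono hz0 hzn h0 h1 i; omega
  · intro i j hij
    simp only [Fin.mk_le_mk]
    have : ⌈z i - θ⌉ ≤ ⌈z j - θ⌉ := Int.ceil_le_ceil (by have := hmono hij; linarith)
    omega
  · apply Fin.ext
    have : ⌈z 0 - θ⌉ ≤ 0 := Int.ceil_le.mpr (by rw [hz0]; push_cast; linarith)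
    show (⌈z 0 - θ⌉).toNat = 0
    omega
  · apply Fin.ext
    show (⌈z (Fin.last n) - θ⌉).toNat = r
    have hle := ceil_le_r' hmono hz0 hzn h0 h1 (Fin.last n)
    have hgt : ((r : ℤ) - 1 : ℤ) < ⌈z (Fin.last n) - θ⌉ := by
      apply Int.lt_ceil.mpr; rw [hzn]; push_cast; linarith
    omega

lemma ip_mkT (i : Fin (n+1)) : ip (mkT hmono hz0 hzn h0 h1) i = ⌈z i - θ⌉ := by
  show ((⌈z i - θ⌉).toNat : ℤ) = ⌈z i - θ⌉
  exact Int.toNat_of_nonneg (ceil_nonneg' hmono hz0 hzn h0 h1 i)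

lemma mkT_mem_own :
    dL z (mkT hmono hz0 hzn h0 h1) ≤ θ ∧ θ < dU z (mkT hmono hz0 hzn h0 h1) := by
  constructor
  · rw [dL_le_iff]
    intro i
    rw [ip_mkT]
    have := Int.le_ceil (z i - θ); linarith
  · rw [lt_dU_iff]
    intro i
    rw [ip_mkT]
    have := Int.ceil_lt_add_one (z i - θ); linarith

lemma eq_mkT_of_mem {a : PartitionNR n r} (hL : dL z a ≤ θ) (hU : θ < dU z a) :
    mkT hmono hz0 hzn h0 h1 = a := by
  apply part_ext
  intro i
  rw [ip_mkT]
  have h2 : z i - (ip a i : ℝ) ≤ θ := le_trans (le_dL z a i) hL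
  have h3 : θ < z i - (ip a i : ℝ) + 1 := lt_of_lt_of_le hU (dU_le z a i)
  have : ⌈z i - θ⌉ = ip a i := by
    apply Int.ceil_eq_iff.mpr  -- ⌈x⌉ = m ↔ m - 1 < x ∧ x ≤ m ?
    constructor
    · push_cast; linarith
    · push_cast; linarith
  exact this

end mkT

section integral
open MeasureTheory
variable {z : Fin (n+1) → ℝ} (hmono : Monotone z) (hz0 : z 0 = 0)
  (hzn : z (Fin.last n) = (r : ℝ))

noncomputable def F (θ : ℝ) : PartitionNR n r :=
  if h : 0 ≤ θ ∧ θ < 1 then mkT hmono hz0 hzn h.1 h.2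
  else mkT hmono hz0 hzn le_rfl zero_lt_one

include hmono hz0 hzn

lemma F_eq {θ : ℝ} (h0 : 0 ≤ θ) (h1 : θ < 1) :
    F hmono hz0 hzn θ = mkT hmono hz0 hzn h0 h1 := by
  rw [F, dif_pos ⟨h0, h1⟩]

lemma ip_F {θ : ℝ} (h0 : 0 ≤ θ) (h1 : θ < 1) (i : Fin (n+1)) :
    ip (F hmono hz0 hzn θ) i = ⌈z i - θ⌉ := by
  rw [F_eq hmono hz0 hzn h0 h1, ip_mkT]

lemma Ico_subset (a : PartitionNR n r) :
    Set.Ico (dL z a) (dU z a) ⊆ Set.Ico (0:ℝ) 1 :=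
  Set.Ico_subset_Ico (dL_nonneg hz0 a) (dU_le_one hzn a)

lemma pointwise_sum (g : PartitionNR n r → ℝ) {θ : ℝ} (hθ : θ ∈ Set.Ico (0:ℝ) 1) :
    ∑ a : PartitionNR n r, (Set.Ico (dL z a) (dU z a)).indicator (fun _ => g a) θ
      = g (F hmono hz0 hzn θ) := by
  obtain ⟨h0, h1⟩ := hθ
  rw [Finset.sum_eq_single (F hmono hz0 hzn θ)]
  · rw [Set.indicator_of_mem]
    rw [F_eq hmono hz0 hzn h0 h1]
    exact Set.mem_Ico.mpr (mkT_mem_own hmono hz0 hzn h0 h1)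
  · intro b _ hb
    apply Set.indicator_of_notMem
    intro hmem
    rw [Set.mem_Ico] at hmem
    exact hb ((F_eq hmono hz0 hzn h0 h1).trans
      (eq_mkT_of_mem hmono hz0 hzn h0 h1 hmem.1 hmem.2)).symm
  · intro h; exact absurd (Finset.mem_univ _) h

lemma wt_mul_eq_integral (g : PartitionNR n r → ℝ) (a : PartitionNR n r) :
    wt z a * g a
      = ∫ θ in Set.Ico (0:ℝ) 1, (Set.Ico (dL z a) (dU z a)).indicator (fun _ => g a) θ := by
  rw [setIntegral_indicator measurableSet_Ico,
    Set.inter_eq_right.mpr (Ico_subset hmono hz0 hzn a), setIntegral_const, measureReal_def, Real.volume_Ico]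
  rcases le_total (dU z a - dL z a) 0 with h | h
  · rw [ENNReal.ofReal_eq_zero.mpr h]
    simp [wt, max_eq_right h]
  · rw [ENNReal.toReal_ofReal h]
    simp [wt, max_eq_left h, smul_eq_mul]

lemma sum_wt_mul (g : PartitionNR n r → ℝ) :
    ∑ a : PartitionNR n r, wt z a * g a
      = ∫ θ in Set.Ico (0:ℝ) 1, g (F hmono hz0 hzn θ) := by
  have hint : ∀ a : PartitionNR n r,
      Integrable (fun θ => (Set.Ico (dL z a) (dU z a)).indicator (fun _ => g a) θ)
        (volume.restrict (Set.Ico (0:ℝ) 1)) := by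
    intro a
    apply Integrable.indicator _ measurableSet_Ico
    apply (integrable_const _)
  calc ∑ a : PartitionNR n r, wt z a * g a
      = ∑ a : PartitionNR n r,
        ∫ θ in Set.Ico (0:ℝ) 1, (Set.Ico (dL z a) (dU z a)).indicator (fun _ => g a) θ := by
        exact Finset.sum_congr rfl fun a _ => wt_mul_eq_integral hmono hz0 hzn g a
    _ = ∫ θ in Set.Ico (0:ℝ) 1,
        ∑ a : PartitionNR n r, (Set.Ico (dL z a) (dU z a)).indicator (fun _ => g a) θ := by
        rw [integral_finset_sum _ (fun a _ => hint a)]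
    _ = ∫ θ in Set.Ico (0:ℝ) 1, g (F hmono hz0 hzn θ) := by
        apply setIntegral_congr_fun measurableSet_Ico
        intro θ hθ
        exact pointwise_sum hmono hz0 hzn g hθ

lemma sum_wt_one : ∑ a : PartitionNR n r, wt z a = 1 := by
  have := sum_wt_mul hmono hz0 hzn (fun _ => 1)
  simpa [Real.volume_Ico] using this

lemma sum_wt_ip (j : Fin (n+1)) :
    ∑ a : PartitionNR n r, wt z a * (ip a j : ℝ) = z j := by
  rw [sum_wt_mul hmono hz0 hzn (fun a => (ip a j : ℝ))]
  set c := Int.fract (z j) with hc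
  have hc0 : 0 ≤ c := Int.fract_nonneg _
  have hc1 : c < 1 := Int.fract_lt_one _
  have hsplit : Set.Ico (0:ℝ) 1 = Set.Ico 0 c ∪ Set.Ico c 1 :=
    (Set.Ico_union_Ico_eq_Ico hc0 hc1.le).symm
  have hdisj : Disjoint (Set.Ico (0:ℝ) c) (Set.Ico c 1) := by
    apply Set.disjoint_left.mpr
    rintro θ ⟨_, h2⟩ ⟨h3, _⟩; exact absurd h3 (not_le.mpr h2)
  have heq1 : Set.EqOn (fun θ => (ip (F hmono hz0 hzn θ) j : ℝ))
      (fun _ => ((⌊z j⌋ : ℝ) + 1)) (Set.Ico 0 c) := by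
    intro θ ⟨h0, h1⟩
    have h1' : θ < 1 := lt_of_lt_of_le h1 hc1.le
    dsimp only
    rw [ip_F hmono hz0 hzn h0 h1']
    have : ⌈z j - θ⌉ = ⌊z j⌋ + 1 := by
      rw [Int.ceil_eq_iff]
      have hf := Int.floor_add_fract (z j)
      constructor
      · push_cast; rw [hc] at h1; linarith
      · have := Int.lt_floor_add_one (z j); push_cast; linarith
    rw [this]; push_cast; ring
  have heq2 : Set.EqOn (fun θ => (ip (F hmono hz0 hzn θ) j : ℝ))
      (fun _ => ((⌊z j⌋ : ℝ))) (Set.Ico c 1) := by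
    intro θ ⟨h0, h1⟩
    have h0' : 0 ≤ θ := le_trans hc0 h0
    dsimp only
    rw [ip_F hmono hz0 hzn h0' h1]
    have : ⌈z j - θ⌉ = ⌊z j⌋ := by
      rw [Int.ceil_eq_iff]
      have hf := Int.floor_add_fract (z j)
      constructor
      · push_cast; rw [hc] at *; linarith
      · rw [hc] at h0; linarith [Int.floor_le (z j)]
    rw [this]
  have hint1 : IntegrableOn (fun θ => (ip (F hmono hz0 hzn θ) j : ℝ)) (Set.Ico 0 c) := by
    exact ((integrableOn_const_iff).mpr (Or.inr (by rw [Real.volume_Ico]; exact ENNReal.ofReal_lt_top))).congr_fun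
      heq1.symm measurableSet_Ico
  have hint2 : IntegrableOn (fun θ => (ip (F hmono hz0 hzn θ) j : ℝ)) (Set.Ico c 1) := by
    exact ((integrableOn_const_iff).mpr (Or.inr (by rw [Real.volume_Ico]; exact ENNReal.ofReal_lt_top))).congr_fun
      heq2.symm measurableSet_Ico
  rw [hsplit, setIntegral_union hdisj measurableSet_Ico hint1 hint2,
    setIntegral_congr_fun measurableSet_Ico heq1, setIntegral_congr_fun measurableSet_Ico heq2,
    setIntegral_const, setIntegral_const, measureReal_def, measureReal_def, Real.volume_Ico, Real.volume_Ico,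
    ENNReal.toReal_ofReal (by linarith), ENNReal.toReal_ofReal (by linarith)]
  have hf := Int.floor_add_fract (z j)
  simp only [smul_eq_mul]
  rw [hc] at *
  ring_nf
  nlinarith [hf]

end integral
section chain

def ple (a b : PartitionNR n r) : Prop := ∀ i, ip a i ≤ ip b i

lemma ple_refl (a : PartitionNR n r) : ple a a := fun _ => le_rfl

lemma ple_trans {a b c : PartitionNR n r} (h1 : ple a b) (h2 : ple b c) : ple a c :=
  fun i => le_trans (h1 i) (h2 i)

lemma ple_antisymm {a b : PartitionNR n r} (h1 : ple a b) (h2 : ple b a) : a = b :=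
  part_ext fun i => le_antisymm (h1 i) (h2 i)

noncomputable def rho (a : PartitionNR n r) : ℤ := ∑ i, ip a i

lemma rho_lt {a b : PartitionNR n r} (h : ple a b) (hne : a ≠ b) : rho a < rho b := by
  apply Finset.sum_lt_sum (fun i _ => h i)
  by_contra hno
  push_neg at hno
  exact hne (part_ext fun i => le_antisymm (h i) (hno i (Finset.mem_univ i)))

variable {k : PartitionNR n r → ℝ} (hk0 : ∀ a, 0 ≤ k a) (hk1 : ∑ a, k a = 1)
  (hkS : ∀ a ∈ spt k, ∀ b ∈ spt k, ∃ e : ℤ, (e = -1 ∨ e = 1) ∧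
    ∀ i : Fin (n + 1), ip a i = ip b i ∨ ip a i = ip b i + e)

noncomputable def zk (k : PartitionNR n r → ℝ) : Fin (n+1) → ℝ :=
  fun j => ∑ a, k a * (ip a j : ℝ)

lemma mem_spt {b : PartitionNR n r} : b ∈ spt k ↔ 0 < k b := by simp [spt]

include hk0 in
lemma k_eq_zero {b : PartitionNR n r} (hb : b ∉ spt k) : k b = 0 := by
  rw [mem_spt, not_lt] at hb
  exact le_antisymm hb (hk0 b)

include hk0 in
lemma sum_spt (f : PartitionNR n r → ℝ) :
    ∑ b, k b * f b = ∑ b ∈ spt k, k b * f b := by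
  symm
  apply Finset.sum_subset (Finset.subset_univ _)
  intro b _ hb
  rw [k_eq_zero hk0 hb, zero_mul]

lemma zk0 : zk k 0 = 0 := by
  simp [zk, ip0]

include hk1 in
lemma zkn : zk k (Fin.last n) = (r : ℝ) := by
  simp only [zk, ipn]
  rw [← Finset.sum_mul, hk1, one_mul]
  norm_cast

include hk0 in
lemma zk_mono : Monotone (zk k) := by
  intro i j hij
  apply Finset.sum_le_sum
  intro a _
  have := ip_mono a hij
  have h2 : (ip a i : ℝ) ≤ (ip a j : ℝ) := by exact_mod_cast this
  nlinarith [hk0 a]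

include hk1 in
lemma zk_sub (a : PartitionNR n r) (i : Fin (n+1)) :
    zk k i - (ip a i : ℝ) = ∑ b, k b * ((ip b i : ℝ) - (ip a i : ℝ)) := by
  simp only [mul_sub, Finset.sum_sub_distrib, ← Finset.sum_mul, hk1, one_mul, zk]

include hkS in
lemma pair_cases {a b : PartitionNR n r} (ha : a ∈ spt k) (hb : b ∈ spt k) :
    ((∀ i, ip a i ≤ ip b i) ∧ ∀ i, ip b i ≤ ip a i + 1) ∨
    ((∀ i, ip b i ≤ ip a i) ∧ ∀ i, ip a i ≤ ip b i + 1) := by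
  obtain ⟨e, he, hab⟩ := hkS a ha b hb
  rcases he with he | he
  · left
    subst he
    constructor <;> intro i <;> rcases hab i with h | h <;> omega
  · right
    subst he
    constructor <;> intro i <;> rcases hab i with h | h <;> omega

include hkS in
lemma chain_total {a b : PartitionNR n r} (ha : a ∈ spt k) (hb : b ∈ spt k) :
    ple a b ∨ ple b a := by
  rcases pair_cases hkS ha hb with h | h
  · exact Or.inl h.1
  · exact Or.inr h.1

include hkS in
lemma chain_step {a b : PartitionNR n r} (ha : a ∈ spt k) (hb : b ∈ spt k)
    (h : ple a b) (i : Fin (n+1)) : ip b i ≤ ip a i + 1 := by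
  rcases pair_cases hkS ha hb with hc | hc
  · exact hc.2 i
  · have := hc.1 i; omega

include hkS in
lemma exists_minimum {s : Finset (PartitionNR n r)} (hs : s.Nonempty) (hsub : s ⊆ spt k) :
    ∃ c ∈ s, ∀ b ∈ s, ple c b := by
  obtain ⟨c, hc, hmin⟩ := s.exists_min_image rho hs
  refine ⟨c, hc, fun b hb => ?_⟩
  rcases chain_total hkS (hsub hc) (hsub hb) with h | h
  · exact h
  · rcases eq_or_ne b c with rfl | hne
    · exact ple_refl b
    · exact absurd (hmin b hb) (not_le.mpr (rho_lt h hne))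

include hkS in
lemma exists_maximum {s : Finset (PartitionNR n r)} (hs : s.Nonempty) (hsub : s ⊆ spt k) :
    ∃ c ∈ s, ∀ b ∈ s, ple b c := by
  obtain ⟨c, hc, hmax⟩ := s.exists_max_image rho hs
  refine ⟨c, hc, fun b hb => ?_⟩
  rcases chain_total hkS (hsub hc) (hsub hb) with h | h
  · rcases eq_or_ne c b with rfl | hne
    · exact ple_refl c
    · exact absurd (hmax b hb) (not_le.mpr (rho_lt h hne))
  · exact h

noncomputable def Gup (k : PartitionNR n r → ℝ) (a : PartitionNR n r) : ℝ :=
  ∑ b ∈ (spt k).filter (fun b => ple a b ∧ b ≠ a), k b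

noncomputable def Hlo (k : PartitionNR n r → ℝ) (a : PartitionNR n r) : ℝ :=
  ∑ b ∈ (spt k).filter (fun b => ple b a ∧ b ≠ a), k b

include hkS in
lemma trichotomy {a b : PartitionNR n r} (ha : a ∈ spt k) (hb : b ∈ spt k) :
    (ple a b ∧ b ≠ a) ∨ b = a ∨ (ple b a ∧ b ≠ a) := by
  rcases eq_or_ne b a with rfl | hne
  · exact Or.inr (Or.inl rfl)
  · rcases chain_total hkS ha hb with h | h
    · exact Or.inl ⟨h, hne⟩
    · exact Or.inr (Or.inr ⟨h, hne⟩)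

include hk0 hk1 hkS in
lemma trichotomy_sum {a : PartitionNR n r} (ha : a ∈ spt k) :
    Gup k a + k a + Hlo k a = 1 := by
  have hsum : ∑ b ∈ spt k, k b = 1 := by
    rw [← hk1]
    apply Finset.sum_subset (Finset.subset_univ _)
    intro b _ hb; exact k_eq_zero hk0 hb
  have hsplit : ∀ b ∈ spt k, k b =
      (if ple a b ∧ b ≠ a then k b else 0) + (if b = a then k b else 0) +
      (if ple b a ∧ b ≠ a then k b else 0) := by
    intro b hb
    rcases trichotomy hkS ha hb with h | h | h
    · rw [if_pos h, if_neg h.2, if_neg (fun h2 : ple b a ∧ b ≠ a => h.2 (ple_antisymm h2.1 h.1))]; ring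
    · subst h
      rw [if_neg (fun h2 : ple b b ∧ b ≠ b => h2.2 rfl), if_pos rfl]; ring
    · rw [if_neg (fun h2 => h.2 (ple_antisymm h.1 h2.1)), if_neg h.2, if_pos h]; ring
  calc Gup k a + k a + Hlo k a
      = ∑ b ∈ spt k, ((if ple a b ∧ b ≠ a then k b else 0) + (if b = a then k b else 0) +
          (if ple b a ∧ b ≠ a then k b else 0)) := by
        rw [Gup, Hlo, Finset.sum_filter, Finset.sum_filter, Finset.sum_add_distrib,
          Finset.sum_add_distrib, Finset.sum_ite_eq' (spt k) a k, if_pos ha]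
    _ = ∑ b ∈ spt k, k b := by
        exact (Finset.sum_congr rfl hsplit).symm
    _ = 1 := hsum

end chain

section chain2
variable {k : PartitionNR n r → ℝ} (hk0 : ∀ a, 0 ≤ k a) (hk1 : ∑ a, k a = 1)
  (hkS : ∀ a ∈ spt k, ∀ b ∈ spt k, ∃ e : ℤ, (e = -1 ∨ e = 1) ∧
    ∀ i : Fin (n + 1), ip a i = ip b i ∨ ip a i = ip b i + e)

lemma le_dU_iff {z : Fin (n+1) → ℝ} {a : PartitionNR n r} {x : ℝ} :
    x ≤ dU z a ↔ ∀ i, x ≤ z i - (ip a i : ℝ) + 1 := by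
  constructor
  · intro h i; exact le_trans h (dU_le z a i)
  · intro h
    have : x - 1 ≤ Finset.univ.inf' Finset.univ_nonempty (fun i => z i - (ip a i : ℝ)) := by
      rw [Finset.le_inf'_iff]
      intro i _; have := h i; linarith
    simp only [dU]; linarith

include hkS in
lemma exists_step_up {a c : PartitionNR n r} (ha : a ∈ spt k) (hc : c ∈ spt k)
    (h : ple a c) (hne : c ≠ a) : ∃ i, ip c i = ip a i + 1 := by
  have hex : ∃ i, ip a i ≠ ip c i := by
    by_contra hno
    push_neg at hno
    exact hne (part_ext fun i => (hno i).symm)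
  obtain ⟨i, hi⟩ := hex
  have h1 := h i
  have h2 := chain_step hkS ha hc h i
  exact ⟨i, by omega⟩

include hk0 hk1 hkS in
lemma dL_le_Gup {a : PartitionNR n r} (ha : a ∈ spt k) : dL (zk k) a ≤ Gup k a := by
  rw [dL_le_iff]
  intro i
  rw [zk_sub hk1, sum_spt hk0, Gup, Finset.sum_filter]
  apply Finset.sum_le_sum
  intro b hb
  by_cases h : ple a b ∧ b ≠ a
  · rw [if_pos h]
    have h1 := chain_step hkS ha hb h.1 i
    have h2 : ((ip b i : ℝ)) - (ip a i : ℝ) ≤ 1 := by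
      have : ((ip b i : ℝ)) ≤ (ip a i : ℝ) + 1 := by exact_mod_cast h1
      linarith
    nlinarith [hk0 b]
  · rw [if_neg h]
    have hle : ip b i ≤ ip a i := by
      rcases trichotomy hkS ha hb with h2 | h2 | h2
      · exact absurd h2 h
      · subst h2; exact le_rfl
      · exact h2.1 i
    have h2 : ((ip b i : ℝ)) - (ip a i : ℝ) ≤ 0 := by
      have : ((ip b i : ℝ)) ≤ (ip a i : ℝ) := by exact_mod_cast hle
      linarith
    nlinarith [hk0 b]

include hk0 hk1 hkS in
lemma Gup_le_dL {a : PartitionNR n r} (ha : a ∈ spt k) : Gup k a ≤ dL (zk k) a := by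
  by_cases hA : ((spt k).filter (fun b => ple a b ∧ b ≠ a)).Nonempty
  · obtain ⟨c, hcmem, hcmin⟩ := exists_minimum hkS hA (Finset.filter_subset _ _)
    rw [Finset.mem_filter] at hcmem
    have hc := hcmem.1
    have hac := hcmem.2.1
    have hca := hcmem.2.2
    obtain ⟨i, hi⟩ := exists_step_up hkS ha hc hac hca
    have key : zk k i - (ip a i : ℝ) = Gup k a := by
      rw [zk_sub hk1, sum_spt hk0, Gup, Finset.sum_filter]
      apply Finset.sum_congr rfl
      intro b hb
      by_cases h : ple a b ∧ b ≠ a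
      · rw [if_pos h]
        have h1 : ple c b := hcmin b (Finset.mem_filter.mpr ⟨hb, h⟩)
        have h2 := h1 i
        have h3 := chain_step hkS ha hb h.1 i
        have h4 : ip b i = ip a i + 1 := by omega
        rw [h4]; push_cast; ring
      · rw [if_neg h]
        have hba : ple b a := by
          rcases trichotomy hkS ha hb with h2 | h2 | h2
          · exact absurd h2 h
          · subst h2; exact ple_refl b
          · exact h2.1
        have hbc : ple b c := ple_trans hba hac
        have h3 := chain_step hkS hb hc hbc i
        have h4 := hba i
        have h5 : ip b i = ip a i := by omega
        rw [h5]; ring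
    linarith [le_dL (zk k) a i]
  · rw [Finset.not_nonempty_iff_eq_empty] at hA
    rw [Gup, hA, Finset.sum_empty]
    exact dL_nonneg zk0 a

include hk0 hk1 hkS in
lemma Gk_le_dU {a : PartitionNR n r} (ha : a ∈ spt k) : Gup k a + k a ≤ dU (zk k) a := by
  have htri := trichotomy_sum hk0 hk1 hkS ha
  rw [le_dU_iff]
  intro i
  have hlow : - Hlo k a ≤ zk k i - (ip a i : ℝ) := by
    rw [zk_sub hk1, sum_spt hk0]
    have : - Hlo k a = ∑ b ∈ spt k, (if ple b a ∧ b ≠ a then -(k b) else 0) := by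
      rw [Hlo, Finset.sum_filter, ← Finset.sum_neg_distrib]
      apply Finset.sum_congr rfl
      intro b _
      split <;> simp
    rw [this]
    apply Finset.sum_le_sum
    intro b hb
    by_cases h : ple b a ∧ b ≠ a
    · rw [if_pos h]
      have h1 := chain_step hkS hb ha h.1 i
      have h2 : (-1 : ℝ) ≤ ((ip b i : ℝ)) - (ip a i : ℝ) := by
        have : ((ip a i : ℝ)) ≤ (ip b i : ℝ) + 1 := by exact_mod_cast h1
        linarith
      nlinarith [hk0 b]
    · rw [if_neg h]
      have hab : ple a b := by
        rcases trichotomy hkS ha hb with h2 | h2 | h2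
        · exact h2.1
        · subst h2; exact ple_refl b
        · exact absurd h2 h
      have h2 : (0 : ℝ) ≤ ((ip b i : ℝ)) - (ip a i : ℝ) := by
        have : ((ip a i : ℝ)) ≤ (ip b i : ℝ) := by exact_mod_cast hab i
        linarith
      nlinarith [hk0 b]
  linarith

include hk0 hk1 hkS in
lemma dU_le_Gk {a : PartitionNR n r} (ha : a ∈ spt k) : dU (zk k) a ≤ Gup k a + k a := by
  have htri := trichotomy_sum hk0 hk1 hkS ha
  by_cases hB : ((spt k).filter (fun b => ple b a ∧ b ≠ a)).Nonempty
  · obtain ⟨c, hcmem, hcmax⟩ := exists_maximum hkS hB (Finset.filter_subset _ _)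
    rw [Finset.mem_filter] at hcmem
    have hc := hcmem.1
    have hac := hcmem.2.1
    have hca := hcmem.2.2
    have hex : ∃ i, ip c i = ip a i - 1 := by
      obtain ⟨i, hi⟩ := exists_step_up hkS hc ha hac (fun h => hca h.symm)
      exact ⟨i, by omega⟩
    obtain ⟨i, hi⟩ := hex
    have key : zk k i - (ip a i : ℝ) = - Hlo k a := by
      rw [zk_sub hk1, sum_spt hk0]
      have hH : - Hlo k a = ∑ b ∈ spt k, (if ple b a ∧ b ≠ a then -(k b) else 0) := by
        rw [Hlo, Finset.sum_filter, ← Finset.sum_neg_distrib]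
        apply Finset.sum_congr rfl
        intro b _
        split <;> simp
      rw [hH]
      apply Finset.sum_congr rfl
      intro b hb
      by_cases h : ple b a ∧ b ≠ a
      · rw [if_pos h]
        have h1 : ple b c := hcmax b (Finset.mem_filter.mpr ⟨hb, h⟩)
        have h2 := h1 i
        have h3 := chain_step hkS hb ha h.1 i
        have h4 : ip b i = ip a i - 1 := by omega
        rw [h4]; push_cast; ring
      · rw [if_neg h]
        have hab : ple a b := by
          rcases trichotomy hkS ha hb with h2 | h2 | h2
          · exact h2.1
          · subst h2; exact ple_refl b
          · exact absurd h2 h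
        have hcb : ple c b := ple_trans hac hab
        have h3 := chain_step hkS hc hb hcb i
        have h4 := hab i
        have h5 : ip b i = ip a i := by omega
        rw [h5]; ring
    have := dU_le (zk k) a i
    rw [key] at this
    linarith
  · rw [Finset.not_nonempty_iff_eq_empty] at hB
    have hH : Hlo k a = 0 := by rw [Hlo, hB, Finset.sum_empty]
    have := dU_le_one (zkn hk1) a
    linarith

include hk0 hk1 hkS in
lemma dL_eq {a : PartitionNR n r} (ha : a ∈ spt k) : dL (zk k) a = Gup k a :=
  le_antisymm (dL_le_Gup hk0 hk1 hkS ha) (Gup_le_dL hk0 hk1 hkS ha)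

include hk0 hk1 hkS in
lemma dU_eq {a : PartitionNR n r} (ha : a ∈ spt k) : dU (zk k) a = Gup k a + k a :=
  le_antisymm (dU_le_Gk hk0 hk1 hkS ha) (Gk_le_dU hk0 hk1 hkS ha)

include hk0 hkS in
lemma sum_ple_eq {c : PartitionNR n r} (hc : c ∈ spt k) :
    ∑ b ∈ spt k, (if ple c b then k b else 0) = k c + Gup k c := by
  have hpt : ∀ b ∈ spt k, (if ple c b then k b else 0) =
      (if b = c then k b else 0) + (if ple c b ∧ b ≠ c then k b else 0) := by
    intro b _
    rcases eq_or_ne b c with rfl | hne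
    · rw [if_pos (ple_refl b), if_pos rfl, if_neg (fun h => h.2 rfl)]; ring
    · by_cases h : ple c b
      · rw [if_pos h, if_neg hne, if_pos ⟨h, hne⟩]; ring
      · rw [if_neg h, if_neg hne, if_neg (fun h2 => h h2.1)]; ring
  rw [Finset.sum_congr rfl hpt, Finset.sum_add_distrib,
    Finset.sum_ite_eq' (spt k) c k, if_pos hc, Gup, Finset.sum_filter]

include hk0 hk1 hkS in
lemma cover {θ : ℝ} (h0 : 0 ≤ θ) (h1 : θ < 1) :
    ∃ b ∈ spt k, dL (zk k) b ≤ θ ∧ θ < dU (zk k) b := by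
  have hspt : (spt k).Nonempty := by
    by_contra h
    rw [Finset.not_nonempty_iff_eq_empty] at h
    have : ∑ a, k a = 0 := Finset.sum_eq_zero
      (fun a _ => k_eq_zero hk0 (by rw [h]; exact Finset.notMem_empty a))
    rw [hk1] at this; norm_num at this
  obtain ⟨M, hM, hMmax⟩ := exists_maximum hkS hspt (le_refl _)
  have hGM : Gup k M = 0 := by
    rw [Gup, Finset.filter_eq_empty_iff.mpr, Finset.sum_empty]
    intro b hb
    intro h
    exact h.2 (ple_antisymm (hMmax b hb) h.1)
  set B := (spt k).filter (fun b => Gup k b ≤ θ) with hB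
  have hBne : B.Nonempty := ⟨M, Finset.mem_filter.mpr ⟨hM, by rw [hGM]; exact h0⟩⟩
  obtain ⟨c, hcmem, hcmin⟩ := exists_minimum hkS hBne (Finset.filter_subset _ _)
  rw [Finset.mem_filter] at hcmem
  obtain ⟨hc, hcθ⟩ := hcmem
  refine ⟨c, hc, ?_, ?_⟩
  · rw [dL_eq hk0 hk1 hkS hc]; exact hcθ
  · rw [dU_eq hk0 hk1 hkS hc]
    by_contra hno
    push_neg at hno
    by_cases hC : ((spt k).filter (fun b => ple b c ∧ b ≠ c)).Nonempty
    · obtain ⟨d, hdmem, hdmax⟩ := exists_maximum hkS hC (Finset.filter_subset _ _)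
      rw [Finset.mem_filter] at hdmem
      have hd := hdmem.1
      have hdc := hdmem.2.1
      have hdne := hdmem.2.2
      have hGd : Gup k d = k c + Gup k c := by
        rw [← sum_ple_eq hk0 hkS hc, Gup, Finset.sum_filter]
        apply Finset.sum_congr rfl
        intro b hb
        by_cases h : ple c b
        · rw [if_pos h, if_pos]
          refine ⟨ple_trans hdc h, ?_⟩
          rintro rfl
          exact hdne (ple_antisymm hdc h)
        · rw [if_neg h, if_neg]
          intro h2
          have hbc : ple b c := by
            rcases trichotomy hkS hc hb with h3 | h3 | h3
            · exact absurd h3.1 h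
            · subst h3; exact ple_refl b
            · exact h3.1
          have hbne : b ≠ c := by
            intro hbc2; subst hbc2; exact h (ple_refl b)
          have : ple b d := hdmax b (Finset.mem_filter.mpr ⟨hb, hbc, hbne⟩)
          exact h2.2 (ple_antisymm this h2.1)
      have hdB : d ∈ B := Finset.mem_filter.mpr ⟨hd, by rw [hGd]; linarith⟩
      have := hcmin d hdB
      exact hdne (ple_antisymm hdc this)
    · rw [Finset.not_nonempty_iff_eq_empty] at hC
      have hall : ∀ b ∈ spt k, ple c b := by
        intro b hb
        rcases trichotomy hkS hc hb with h | h | h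
        · exact h.1
        · subst h; exact ple_refl b
        · exact absurd (Finset.mem_filter.mpr ⟨hb, h⟩) (by rw [hC]; exact Finset.notMem_empty b)
      have hone : ∑ b ∈ spt k, k b = 1 := by
        rw [← hk1]
        apply Finset.sum_subset (Finset.subset_univ _)
        intro b _ hb; exact k_eq_zero hk0 hb
      have : (1 : ℝ) = k c + Gup k c := by
        rw [← sum_ple_eq hk0 hkS hc, ← hone]
        apply Finset.sum_congr rfl
        intro b hb
        rw [if_pos (hall b hb)]
      linarith

include hk0 hk1 hkS in
lemma wt_zk_eq (a : PartitionNR n r) : wt (zk k) a = k a := by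
  by_cases ha : a ∈ spt k
  · rw [wt, dL_eq hk0 hk1 hkS ha, dU_eq hk0 hk1 hkS ha]
    simp [max_eq_left (hk0 a)]
  · have hka : k a = 0 := k_eq_zero hk0 ha
    rw [wt, hka]
    rcases le_or_gt (dU (zk k) a) (dL (zk k) a) with h | h
    · rw [max_eq_right (by linarith)]
    · exfalso
      have h0 : 0 ≤ dL (zk k) a := dL_nonneg zk0 a
      have h1 : dL (zk k) a < 1 := lt_of_lt_of_le h (dU_le_one (zkn hk1) a)
      obtain ⟨b, hb, hbL, hbU⟩ := cover hk0 hk1 hkS h0 h1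
      have hma := eq_mkT_of_mem (zk_mono hk0) zk0 (zkn hk1) h0 h1 le_rfl h
      have hmb := eq_mkT_of_mem (zk_mono hk0) zk0 (zkn hk1) h0 h1 hbL hbU
      rw [hma] at hmb
      subst hmb
      exact ha hb

end chain2

section assemble
variable (hn : 1 ≤ n) (hr : 1 ≤ r)

lemma tele (f : Fin (n+1) → ℝ) (j : Fin (n+1)) :
    ∑ i : Fin n, (if (i : ℕ) < (j : ℕ) then f i.succ - f i.castSucc else 0) = f j - f 0 := by
  induction j using Fin.induction with
  | zero => simp
  | succ j ih =>
    have hsplit : ∀ i : Fin n,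
        (if (i : ℕ) < (j.succ : ℕ) then f i.succ - f i.castSucc else 0)
          = (if (i : ℕ) < (j.castSucc : ℕ) then f i.succ - f i.castSucc else 0)
            + (if i = j then f i.succ - f i.castSucc else 0) := by
      intro i
      rcases eq_or_ne i j with rfl | hne
      · rw [if_pos (by simp), if_neg (by simp), if_pos rfl]; ring
      · have hv : (i : ℕ) ≠ (j : ℕ) := fun h => hne (Fin.ext h)
        simp only [Fin.val_succ, Fin.coe_castSucc]
        rcases lt_or_ge (i : ℕ) (j : ℕ) with h | h
        · rw [if_pos (by omega), if_pos h, if_neg hne]; ring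
        · rw [if_neg (by omega), if_neg (by omega), if_neg hne]; ring
    rw [Finset.sum_congr rfl (fun i _ => hsplit i), Finset.sum_add_distrib,
      Finset.sum_ite_eq' Finset.univ j (fun i => f i.succ - f i.castSucc), if_pos (Finset.mem_univ j), ih]
    ring

noncomputable def phim (k : PartitionNR n r → ℝ) (i : Fin n) : ℝ :=
  (zk k i.succ - zk k i.castSucc) / r

noncomputable def zx (r : ℕ) (x : Fin n → ℝ) (j : Fin (n+1)) : ℝ :=
  r * ∑ i : Fin n, (if (i : ℕ) < (j : ℕ) then x i else 0)

lemma zx0 (x : Fin n → ℝ) : zx r x 0 = 0 := by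
  simp [zx]

lemma zxn (x : Fin n → ℝ) (hx1 : ∑ i, x i = 1) : zx r x (Fin.last n) = r := by
  have : ∀ i : Fin n, (if (i : ℕ) < (Fin.last n : ℕ) then x i else 0) = x i := by
    intro i; rw [if_pos]; exact i.is_lt
  rw [zx, Finset.sum_congr rfl (fun i _ => this i), hx1, mul_one]

lemma zx_mono (x : Fin n → ℝ) (hx0 : ∀ i, 0 ≤ x i) : Monotone (zx r x) := by
  intro j j' hjj
  apply mul_le_mul_of_nonneg_left _ (by positivity)
  apply Finset.sum_le_sum
  intro i _
  have hv : (j : ℕ) ≤ (j' : ℕ) := hjj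
  rcases lt_or_ge (i : ℕ) (j : ℕ) with h | h
  · rw [if_pos h, if_pos (by omega)]
  · rw [if_neg (by omega)]
    split
    · exact hx0 i
    · exact le_rfl

lemma zx_diff (x : Fin n → ℝ) (j : Fin n) :
    zx r x j.succ - zx r x j.castSucc = r * x j := by
  rw [zx, zx, ← mul_sub, ← Finset.sum_sub_distrib]
  congr 1
  have hsplit : ∀ i : Fin n,
      (if (i : ℕ) < (j.succ : ℕ) then x i else 0) - (if (i : ℕ) < (j.castSucc : ℕ) then x i else 0)
        = if i = j then x i else 0 := by
    intro i
    rcases eq_or_ne i j with rfl | hne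
    · rw [if_pos (by simp), if_neg (by simp), if_pos rfl]; ring
    · have hv : (i : ℕ) ≠ (j : ℕ) := fun h => hne (Fin.ext h)
      simp only [Fin.val_succ, Fin.coe_castSucc]
      rcases lt_or_ge (i : ℕ) (j : ℕ) with h | h
      · rw [if_pos (by omega), if_pos h, if_neg hne]; ring
      · rw [if_neg (by omega), if_neg (by omega), if_neg hne]; ring
  rw [Finset.sum_congr rfl (fun i _ => hsplit i),
    Finset.sum_ite_eq' Finset.univ j x, if_pos (Finset.mem_univ j)]

include hr in
lemma zx_phim {k : PartitionNR n r → ℝ} : zx r (phim k) = zk k := by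
  funext j
  have hrne : (r : ℝ) ≠ 0 := by positivity
  have : ∀ i : Fin n, (if (i : ℕ) < (j : ℕ) then phim k i else 0)
      = (if (i : ℕ) < (j : ℕ) then zk k i.succ - zk k i.castSucc else 0) / r := by
    intro i
    rw [phim]
    split <;> simp
  rw [zx, Finset.sum_congr rfl (fun i _ => this i), ← Finset.sum_div, tele, zk0]
  field_simp
  simp

end assemble

section final
variable (hn : 1 ≤ n) (hr : 1 ≤ r)

lemma ceil_pair {x θ θ' : ℝ} (h0 : 0 ≤ θ) (hle : θ ≤ θ') (h1' : θ' < 1) :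
    ⌈x - θ⌉ = ⌈x - θ'⌉ ∨ ⌈x - θ⌉ = ⌈x - θ'⌉ + 1 := by
  have hm : ⌈x - θ'⌉ ≤ ⌈x - θ⌉ := Int.ceil_le_ceil (by linarith)
  have hup : ⌈x - θ⌉ ≤ ⌈x - θ'⌉ + 1 := by
    rw [Int.ceil_le]
    push_cast
    have := Int.le_ceil (x - θ')
    linarith
  omega

lemma wt_pos_pair {z : Fin (n+1) → ℝ} (hmono : Monotone z) (hz0 : z 0 = 0)
    (hzn : z (Fin.last n) = (r : ℝ)) {a b : PartitionNR n r}
    (hwa : 0 < wt z a) (hwb : 0 < wt z b) :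
    ∃ e : ℤ, (e = -1 ∨ e = 1) ∧
      ∀ i : Fin (n + 1), ip a i = ip b i ∨ ip a i = ip b i + e := by
  have hada : dL z a < dU z a := by
    by_contra h
    rw [wt, max_eq_right (by linarith [not_lt.mp h])] at hwa
    exact lt_irrefl _ hwa
  have hbdb : dL z b < dU z b := by
    by_contra h
    rw [wt, max_eq_right (by linarith [not_lt.mp h])] at hwb
    exact lt_irrefl _ hwb
  have ha0 : 0 ≤ dL z a := dL_nonneg hz0 a
  have hb0 : 0 ≤ dL z b := dL_nonneg hz0 b
  have ha1 : dL z a < 1 := lt_of_lt_of_le hada (dU_le_one hzn a)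
  have hb1 : dL z b < 1 := lt_of_lt_of_le hbdb (dU_le_one hzn b)
  have hia : ∀ i, ip a i = ⌈z i - dL z a⌉ := by
    intro i
    have h2 := ip_mkT hmono hz0 hzn ha0 ha1 i
    rwa [eq_mkT_of_mem hmono hz0 hzn ha0 ha1 le_rfl hada] at h2
  have hib : ∀ i, ip b i = ⌈z i - dL z b⌉ := by
    intro i
    have h2 := ip_mkT hmono hz0 hzn hb0 hb1 i
    rwa [eq_mkT_of_mem hmono hz0 hzn hb0 hb1 le_rfl hbdb] at h2
  rcases le_total (dL z a) (dL z b) with h | h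
  · refine ⟨1, Or.inr rfl, fun i => ?_⟩
    rw [hia i, hib i]
    exact ceil_pair ha0 h hb1
  · refine ⟨-1, Or.inl rfl, fun i => ?_⟩
    rw [hia i, hib i]
    rcases ceil_pair hb0 h ha1 (x := z i) with hc | hc <;> omega

lemma isComplex_Knr : IsComplex (Knr n r) := by
  intro A hA B hB
  rw [Knr, Finset.mem_filter] at hA ⊢
  exact ⟨Finset.mem_univ _, fun a ha b hb => hA.2 a (hB ha) b (hB hb)⟩

lemma orderPres : IsOrderPreserving (Knr n r) (Finset.univ : Finset (Finset (Fin n))) (fnr n r) := by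
  intro A B _ hAB
  constructor
  · intro i hi
    rw [fnr, Finset.mem_filter] at hi ⊢
    obtain ⟨_, a, ha, hne⟩ := hi
    exact ⟨Finset.mem_univ _, a, hAB ha, hne⟩
  · exact Finset.mem_univ _

include hr in
lemma spt_phim {k : PartitionNR n r → ℝ} (hk0 : ∀ a, 0 ≤ k a) :
    spt (phim k) = fnr n r (spt k) := by
  have hrpos : (0:ℝ) < r := by positivity
  ext i
  simp only [spt, fnr, Finset.mem_filter, Finset.mem_univ, true_and]
  have hdiff : zk k i.succ - zk k i.castSucc
      = ∑ a, k a * ((ip a i.succ : ℝ) - (ip a i.castSucc : ℝ)) := by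
    rw [zk, zk, ← Finset.sum_sub_distrib]
    apply Finset.sum_congr rfl
    intro a _; ring
  constructor
  · intro hpos
    by_contra hno
    push_neg at hno
    have : phim k i = 0 := by
      rw [phim, hdiff]
      rw [Finset.sum_eq_zero, zero_div]
      intro a _
      rcases lt_or_ge 0 (k a) with hka | hka
      · have h3 := hno a hka
        rw [show ip a i.succ = ip a i.castSucc from by simp only [ip, h3]]
        ring
      · rw [le_antisymm hka (hk0 a)]; ring
    rw [this] at hpos
    exact lt_irrefl _ hpos
  · rintro ⟨a, ha, hne⟩
    rw [phim, hdiff]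
    apply div_pos _ hrpos
    apply Finset.sum_pos' _ ⟨a, Finset.mem_univ a, _⟩
    · intro b _
      apply mul_nonneg (hk0 b)
      have := ip_mono b (Fin.castSucc_le_succ i)
      have h2 : ((ip b i.castSucc : ℝ)) ≤ (ip b i.succ : ℝ) := by exact_mod_cast this
      linarith
    · apply mul_pos ha
      have hlt : a.1 i.castSucc < a.1 i.succ :=
        lt_of_le_of_ne (a.2.1 (Fin.castSucc_le_succ i)) hne
      have : ip a i.castSucc < ip a i.succ := by
        simp only [ip]; exact_mod_cast hlt
      have h2 : ((ip a i.castSucc : ℝ)) < (ip a i.succ : ℝ) := by exact_mod_cast this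
      linarith

include hr in
lemma phim_mem {k : PartitionNR n r → ℝ} (hk : k ∈ realization (Knr n r)) :
    phim k ∈ realization (Finset.univ : Finset (Finset (Fin n))) := by
  obtain ⟨hk0, hk1, _⟩ := hk
  have hrpos : (0:ℝ) < r := by positivity
  refine ⟨?_, ?_, Finset.mem_univ _⟩
  · intro i
    rw [phim]
    apply div_nonneg _ hrpos.le
    have := zk_mono hk0 (Fin.castSucc_le_succ i)
    linarith
  · have : ∑ i : Fin n, phim k i
        = (∑ i : Fin n, (if (i : ℕ) < (Fin.last n : ℕ) then zk k i.succ - zk k i.castSucc else 0)) / r := by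
      rw [Finset.sum_div]
      apply Finset.sum_congr rfl
      intro i _
      rw [Fin.val_last, if_pos i.is_lt, phim]
    rw [this, tele, zk0, zkn hk1, sub_zero, div_self (ne_of_gt hrpos)]

include hr in
lemma psim_mem {x : Fin n → ℝ}
    (hx : x ∈ realization (Finset.univ : Finset (Finset (Fin n)))) :
    (fun a : PartitionNR n r => wt (zx r x) a) ∈ realization (Knr n r) := by
  obtain ⟨hx0, hx1, _⟩ := hx
  have hmono := zx_mono (r := r) x hx0
  have hz0 := zx0 (r := r) x
  have hzn := zxn (r := r) x hx1
  refine ⟨fun a => le_max_right _ _, sum_wt_one hmono hz0 hzn, ?_⟩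
  rw [Knr, Finset.mem_filter]
  refine ⟨Finset.mem_univ _, ?_⟩
  intro a ha b hb
  rw [mem_spt] at ha hb
  exact wt_pos_pair hmono hz0 hzn ha hb

lemma unpack_hkS {k : PartitionNR n r → ℝ} (hk : k ∈ realization (Knr n r)) :
    ∀ a ∈ spt k, ∀ b ∈ spt k, ∃ e : ℤ, (e = -1 ∨ e = 1) ∧
      ∀ i : Fin (n + 1), ip a i = ip b i ∨ ip a i = ip b i + e := by
  have h := hk.2.2
  rw [Knr, Finset.mem_filter] at h
  exact h.2

include hr in
lemma zk_wt_zx {x : Fin n → ℝ}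
    (hx : x ∈ realization (Finset.univ : Finset (Finset (Fin n)))) (j : Fin (n+1)) :
    zk (fun a : PartitionNR n r => wt (zx r x) a) j = zx r x j := by
  obtain ⟨hx0, hx1, _⟩ := hx
  have hmono := zx_mono (r := r) x hx0
  have hz0 := zx0 (r := r) x
  have hzn := zxn (r := r) x hx1
  exact sum_wt_ip hmono hz0 hzn j

noncomputable def theEquiv :
    realization (Knr n r) ≃ realization (Finset.univ : Finset (Finset (Fin n))) where
  toFun k := ⟨phim k.1, phim_mem hr k.2⟩
  invFun x := ⟨(fun a : PartitionNR n r => wt (zx r x.1) a), psim_mem hr x.2⟩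
  left_inv k := by
    apply Subtype.ext
    funext a
    show wt (zx r (phim k.1)) a = k.1 a
    rw [zx_phim hr]
    exact wt_zk_eq k.2.1 k.2.2.1 (unpack_hkS k.2) a
  right_inv x := by
    apply Subtype.ext
    funext i
    show phim (fun a : PartitionNR n r => wt (zx r x.1) a) i = x.1 i
    rw [phim, zk_wt_zx hr x.2, zk_wt_zx hr x.2, zx_diff]
    have hrpos : (0:ℝ) < r := by positivity
    field_simp

lemma isClosed_realization {V : Type*} [Fintype V] {K : Finset (Finset V)}
    (hK : IsComplex K) : IsClosed (realization K) := by
  have hchar : realization K = ⋃ A ∈ K,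
      {k : V → ℝ | (∀ v, 0 ≤ k v) ∧ ∑ v, k v = 1 ∧ ∀ v, v ∉ A → k v ≤ 0} := by
    ext k
    simp only [Set.mem_iUnion, Set.mem_setOf_eq]
    constructor
    · rintro ⟨h0, h1, h2⟩
      exact ⟨spt k, h2, h0, h1, fun v hv => by
        by_contra h
        exact hv (by rw [spt, Finset.mem_filter]; exact ⟨Finset.mem_univ _, by linarith⟩)⟩
    · rintro ⟨A, hA, h0, h1, h2⟩
      refine ⟨h0, h1, hK A hA _ ?_⟩
      intro v hv
      rw [spt, Finset.mem_filter] at hv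
      by_contra h
      exact absurd (h2 v h) (not_le.mpr hv.2)
  rw [hchar]
  apply Set.Finite.isClosed_biUnion (Finset.finite_toSet K)
  intro A _
  have hset : {k : V → ℝ | (∀ v, 0 ≤ k v) ∧ ∑ v, k v = 1 ∧ ∀ v, v ∉ A → k v ≤ 0}
      = (⋂ v, {k : V → ℝ | 0 ≤ k v}) ∩ ({k : V → ℝ | ∑ v, k v = 1}
        ∩ ⋂ v, {k : V → ℝ | v ∉ A → k v ≤ 0}) := by
    ext k
    simp only [Set.mem_setOf_eq, Set.mem_inter_iff, Set.mem_iInter]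
  rw [hset]
  apply IsClosed.inter
  · exact isClosed_iInter (fun v => isClosed_le continuous_const (continuous_apply v))
  apply IsClosed.inter
  · exact isClosed_eq (continuous_finset_sum _ (fun v _ => continuous_apply v)) continuous_const
  · apply isClosed_iInter
    intro v
    by_cases hv : v ∈ A
    · have : {k : V → ℝ | v ∉ A → k v ≤ 0} = Set.univ := by
        ext k; simp [hv]
      rw [this]; exact isClosed_univ
    · have : {k : V → ℝ | v ∉ A → k v ≤ 0} = {k : V → ℝ | k v ≤ 0} := by
        ext k; simp [hv]
      rw [this]
      exact isClosed_le (continuous_apply v) continuous_const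

lemma isCompact_realization {V : Type*} [Fintype V] {K : Finset (Finset V)}
    (hK : IsComplex K) : IsCompact (realization K) := by
  have hpi : IsCompact (Set.pi Set.univ (fun _ : V => Set.Icc (0:ℝ) 1)) :=
    isCompact_univ_pi fun _ => isCompact_Icc
  apply IsCompact.of_isClosed_subset hpi (isClosed_realization hK)
  intro k hk
  rw [Set.mem_univ_pi]
  intro v
  refine ⟨hk.1 v, ?_⟩
  rw [← hk.2.1]
  exact Finset.single_le_sum (fun w _ => hk.1 w) (Finset.mem_univ v)

lemma continuous_phim_sub :
    Continuous (fun p : realization (Knr n r) => phim (p.1 : PartitionNR n r → ℝ)) := by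
  have hcont : Continuous (fun k : PartitionNR n r → ℝ => phim k) := by
    apply continuous_pi
    intro i
    simp only [phim, zk]
    apply Continuous.div_const
    apply Continuous.sub
    · exact continuous_finset_sum _ (fun a _ => ((continuous_apply a).mul continuous_const))
    · exact continuous_finset_sum _ (fun a _ => ((continuous_apply a).mul continuous_const))
  exact hcont.comp continuous_subtype_val

end final

end KnrSub

open KnrSub in
/-- For all `n ≥ 1` and `r ≥ 1`, `K_{n,r}` is a finite simplicial complex on the vertex set
`Π_{n,r}`, `f_{n,r}` is order preserving into the full simplex `P[1,n]` (on `Fin n`), and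
`f_{n,r} : K_{n,r} → P[1,n]` is a subdivision. -/
theorem Knr_isSubdivision (n r : ℕ) (hn : 1 ≤ n) (hr : 1 ≤ r) :
    IsComplex (Knr n r) ∧
    IsOrderPreserving (Knr n r) (Finset.univ : Finset (Finset (Fin n))) (fnr n r) ∧
    IsSubdivision (Knr n r) (Finset.univ : Finset (Finset (Fin n))) (fnr n r) := by
  refine ⟨isComplex_Knr, orderPres, orderPres, ?_⟩
  have hcs : CompactSpace (realization (Knr n r)) :=
    isCompact_iff_compactSpace.mp (isCompact_realization isComplex_Knr)
  have hcont : Continuous (⇑(theEquiv (n := n) hr)) := by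
    apply Continuous.subtype_mk
    exact continuous_phim_sub
  refine ⟨hcont.homeoOfEquivCompactToT2, ?_⟩
  intro k
  show spt ((theEquiv (n := n) hr k : Fin n → ℝ)) = fnr n r (spt (k : PartitionNR n r → ℝ))
  show spt (phim (k : PartitionNR n r → ℝ)) = fnr n r (spt (k : PartitionNR n r → ℝ))
  exact spt_phim hr k.2.1
end
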